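/- Assume the linear map x ↦ (C·B)·x from ℝ^p to ℝ^q is surjective (C·B has full row rank). Let y_d : [0,T] → ℝ^q be continuously differentiable with y_d(0) = C·x₀. Then y_d is trackable: there exists a continuous u : [0,T] → ℝ^p such that y(u)(t) = y_d(t) for all t ∈ [0,T]. -/

import Mathlib

open MeasureTheory Set NormedSpace

section trackAux
variable {n m p q : ℕ}

attribute [local instance] Matrix.linftyOpNormedAddCommGroup Matrix.linftyOpNormedRing
  Matrix.linftyOpNormedAlgebra

noncomputable def mulVecL : Matrix (Fin n) (Fin n) ℝ →L[ℝ] (Fin n → ℝ) →L[ℝ] (Fin n → ℝ) :=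
  LinearMap.toContinuousLinearMap
    { toFun := fun M => LinearMap.toContinuousLinearMap M.mulVecLin
      map_add' := by intro M N; ext v i; simp [Matrix.add_mulVec]
      map_smul' := by intro c M; ext v i; simp [Matrix.smul_mulVec] }

theorem mulVecL_apply (M : Matrix (Fin n) (Fin n) ℝ) (v : Fin n → ℝ) :
    mulVecL M v = M.mulVec v := rfl

theorem hasDerivAt_mulVec {Mt : ℝ → Matrix (Fin n) (Fin n) ℝ} {Mt' : Matrix (Fin n) (Fin n) ℝ}
    {vt : ℝ → Fin n → ℝ} {vt' : Fin n → ℝ} {t : ℝ}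
    (hM : HasDerivAt Mt Mt' t) (hv : HasDerivAt vt vt' t) :
    HasDerivAt (fun s => (Mt s).mulVec (vt s)) (Mt'.mulVec (vt t) + (Mt t).mulVec vt') t := by
  have h1 : HasDerivAt (fun s => mulVecL (Mt s)) (mulVecL Mt') t :=
    mulVecL.hasFDerivAt.comp_hasDerivAt t hM
  simpa [mulVecL_apply] using h1.clm_apply hv

theorem hasDerivAt_exp_smul (M : Matrix (Fin n) (Fin n) ℝ) (t : ℝ) :
    HasDerivAt (fun s : ℝ => exp (s • M)) (M * exp (t • M)) t := by
  have : CompleteSpace (Matrix (Fin n) (Fin n) ℝ) := FiniteDimensional.complete ℝ _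
  exact hasDerivAt_exp_smul_const' M t

theorem exp_smul_add (M : Matrix (Fin n) (Fin n) ℝ) (a b : ℝ) :
    exp ((a + b) • M) = exp (a • M) * exp (b • M) := by
  rw [add_smul]
  exact Matrix.exp_add_of_commute _ _ ((Commute.refl M).smul_left a |>.smul_right b)

theorem exp_smul_neg_mul (M : Matrix (Fin n) (Fin n) ℝ) (a : ℝ) :
    exp (a • M) * exp ((-a) • M) = 1 := by
  rw [← exp_smul_add]
  simp [exp_zero]

theorem exp_smul_sub (M : Matrix (Fin n) (Fin n) ℝ) (a b : ℝ) :
    exp ((a - b) • M) = exp (a • M) * exp ((-b) • M) := by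
  rw [← exp_smul_add]; ring_nf

theorem hasDerivAt_exp_neg_smul (M : Matrix (Fin n) (Fin n) ℝ) (t : ℝ) :
    HasDerivAt (fun s : ℝ => exp ((-s) • M)) (-(M * exp ((-t) • M))) t := by
  have h := (hasDerivAt_exp_smul M (-t)).scomp t (hasDerivAt_neg t)
  simp only [Function.comp_def, neg_one_smul] at h
  exact h

theorem commute_exp_smul (M : Matrix (Fin n) (Fin n) ℝ) (a : ℝ) :
    M * exp (a • M) = exp (a • M) * M :=
  (((Commute.refl M).smul_right a).exp_right).eq

theorem continuous_exp_smul (M : Matrix (Fin n) (Fin n) ℝ) :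
    Continuous fun s : ℝ => exp (s • M) :=
  continuous_iff_continuousAt.2 fun t => (hasDerivAt_exp_smul M t).continuousAt

theorem continuous_exp_neg_smul (M : Matrix (Fin n) (Fin n) ℝ) :
    Continuous fun s : ℝ => exp ((-s) • M) :=
  continuous_iff_continuousAt.2 fun t => (hasDerivAt_exp_neg_smul M t).continuousAt

end trackAux

theorem continuous_mulVec₂ {X : Type*} [TopologicalSpace X] {a b : ℕ}
    {M : X → Matrix (Fin a) (Fin b) ℝ} {v : X → Fin b → ℝ}
    (hM : Continuous M) (hv : Continuous v) :
    Continuous fun x => (M x).mulVec (v x) := by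
  refine continuous_pi fun i => ?_
  simp only [Matrix.mulVec, dotProduct]
  exact continuous_finset_sum _ fun j _ =>
    (((continuous_apply j).comp ((continuous_apply i).comp hM)).mul ((continuous_apply j).comp hv))

theorem continuous_const_mulVec {X : Type*} [TopologicalSpace X] {a b : ℕ}
    (M : Matrix (Fin a) (Fin b) ℝ) {v : X → Fin b → ℝ} (hv : Continuous v) :
    Continuous fun x => M.mulVec (v x) :=
  continuous_mulVec₂ continuous_const hv

theorem HasDerivAt.const_mulVec' {a b : ℕ} (M : Matrix (Fin a) (Fin b) ℝ)
    {ξ : ℝ → Fin b → ℝ} {ξ' : Fin b → ℝ} {t : ℝ} (h : HasDerivAt ξ ξ' t) :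
    HasDerivAt (fun s => M.mulVec (ξ s)) (M.mulVec ξ') t := by
  have := (LinearMap.toContinuousLinearMap M.mulVecLin).hasFDerivAt.comp_hasDerivAt t h
  exact this

set_option maxHeartbeats 1000000 in
/-- **trackability for full row rank `C·B`.** If `C·B` has full row rank and
`y_d` is continuously differentiable on `[0,T]` with `y_d(0) = C·x₀`, then `y_d` is
trackable: some continuous input `u` on `[0,T]` produces the output `y_d`. -/
theorem trackable_of_full_row_rank
    (T : ℝ) (hT : 0 < T) (n p q : ℕ)
    (A : Matrix (Fin n) (Fin n) ℝ) (B : Matrix (Fin n) (Fin p) ℝ)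
    (C : Matrix (Fin q) (Fin n) ℝ) (x₀ : Fin n → ℝ)
    (w : ℝ → Fin n → ℝ) (hw : ContinuousOn w (Icc 0 T))
    (hCB : Function.Surjective fun x : Fin p → ℝ => (C * B).mulVec x)
    (yd : ℝ → Fin q → ℝ) (hyd : ContDiffOn ℝ 1 yd (Icc 0 T))
    (hyd0 : yd 0 = C.mulVec x₀) :
    ∃ u : ℝ → Fin p → ℝ, ContinuousOn u (Icc 0 T) ∧
      ∀ t ∈ Icc (0:ℝ) T,
        C.mulVec ((NormedSpace.exp (t • A)).mulVec x₀) +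
          (∫ τ in (0:ℝ)..t,
            C.mulVec ((NormedSpace.exp ((t - τ) • A)).mulVec (B.mulVec (u τ) + w τ))) = yd t := by
  -- right inverse K of C*B
  have hsurj : Function.Surjective (C * B).mulVecLin := hCB
  obtain ⟨ψ, hψ⟩ := (C * B).mulVecLin.exists_rightInverse_of_surjective
    (LinearMap.range_eq_top.2 hsurj)
  set K : Matrix (Fin p) (Fin q) ℝ := LinearMap.toMatrix' ψ with hKdef
  have hK : ∀ y, (C * B).mulVec (K.mulVec y) = y := by
    intro y
    have h1 : K.mulVec y = ψ y := by
      rw [← Matrix.mulVecLin_apply, hKdef]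
      rw [show Matrix.mulVecLin (LinearMap.toMatrix' ψ) = ψ from
        LinearMap.toMatrix'.symm_apply_apply ψ]
    rw [h1, ← Matrix.mulVecLin_apply]
    exact DFunLike.congr_fun hψ y
  -- clamp
  set cl : ℝ → ℝ := fun t => ((projIcc (0:ℝ) T hT.le t) : ℝ) with hcl
  have hclcont : Continuous cl := continuous_induced_dom.comp continuous_projIcc
  have hclmem : ∀ t, cl t ∈ Icc (0:ℝ) T := fun t => (projIcc (0:ℝ) T hT.le t).2
  have hclid : ∀ t ∈ Icc (0:ℝ) T, cl t = t := fun t ht => by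
    simp [hcl, projIcc_of_mem hT.le ht]
  -- extended derivative and disturbance
  set v : ℝ → Fin q → ℝ := fun t => derivWithin yd (Icc 0 T) (cl t) with hv
  set W : ℝ → Fin n → ℝ := fun t => w (cl t) with hW
  have hvcont : Continuous v :=
    (hyd.continuousOn_derivWithin (uniqueDiffOn_Icc hT) le_rfl).comp_continuous hclcont hclmem
  have hWcont : Continuous W := hw.comp_continuous hclcont hclmem
  have hydderiv : ∀ t ∈ Icc (0:ℝ) T, HasDerivWithinAt yd (v t) (Icc 0 T) t := by
    intro t ht
    have h2 := ((hyd.differentiableOn one_ne_zero) t ht).hasDerivWithinAt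
    simpa [hv, hclid t ht] using h2
  -- closed-loop matrix and forcing term
  set Acl : Matrix (Fin n) (Fin n) ℝ := A - B * K * (C * A) with hAcl
  set f : ℝ → Fin n → ℝ := fun s =>
    B.mulVec (K.mulVec (v s)) + (W s - B.mulVec (K.mulVec (C.mulVec (W s)))) with hf
  have hfcont : Continuous f :=
    (continuous_const_mulVec B (continuous_const_mulVec K hvcont)).add
      (hWcont.sub (continuous_const_mulVec B (continuous_const_mulVec K
        (continuous_const_mulVec C hWcont))))
  set g : ℝ → Fin n → ℝ := fun s => (exp ((-s) • Acl)).mulVec (f s) with hg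
  have hgcont : Continuous g := continuous_mulVec₂ (continuous_exp_neg_smul Acl) hfcont
  set G : ℝ → Fin n → ℝ := fun t => x₀ + ∫ s in (0:ℝ)..t, g s with hG
  have hGderiv : ∀ t, HasDerivAt G (g t) t := fun t =>
    ((hgcont.integral_hasStrictDerivAt 0 t).hasDerivAt).const_add x₀
  set x : ℝ → Fin n → ℝ := fun t => (exp (t • Acl)).mulVec (G t) with hx
  have hxderiv : ∀ t, HasDerivAt x (Acl.mulVec (x t) + f t) t := by
    intro t
    have h := hasDerivAt_mulVec (hasDerivAt_exp_smul Acl t) (hGderiv t)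
    convert h using 1
    congr 1
    · rw [hx]; rw [Matrix.mulVec_mulVec]
    · rw [hg, Matrix.mulVec_mulVec, exp_smul_neg_mul, Matrix.one_mulVec]
  have hxcont : Continuous x := continuous_iff_continuousAt.2 fun t => (hxderiv t).continuousAt
  have hx0 : x 0 = x₀ := by
    simp [hx, hG, zero_smul, exp_zero, Matrix.one_mulVec]
  -- the input
  set u : ℝ → Fin p → ℝ := fun t =>
    K.mulVec (v t - C.mulVec (W t) - C.mulVec (A.mulVec (x t))) with hu
  have hucont : Continuous u := continuous_const_mulVec K
    ((hvcont.sub (continuous_const_mulVec C hWcont)).sub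
      (continuous_const_mulVec C (continuous_const_mulVec A hxcont)))
  -- x solves the open-loop ODE
  have hode : ∀ t, A.mulVec (x t) + (B.mulVec (u t) + W t) = Acl.mulVec (x t) + f t := by
    intro t
    simp only [hu, hf, hAcl, Matrix.sub_mulVec, Matrix.mulVec_sub, Matrix.mulVec_mulVec,
      Matrix.mul_assoc]
    abel
  have hode' : ∀ τ, HasDerivAt x (A.mulVec (x τ) + (B.mulVec (u τ) + W τ)) τ := by
    intro τ
    rw [hode τ]; exact hxderiv τ
  -- matrix identity (C*B)*K = 1
  have hKmat : (C * B) * K = 1 := by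
    apply LinearMap.toMatrix'.symm.injective
    refine LinearMap.ext fun y => ?_
    have h1 := hK y
    simpa [LinearMap.toMatrix'_symm, Matrix.mulVecLin_apply, ← Matrix.mulVec_mulVec] using h1
  have hCAcl : C * Acl = 0 := by
    rw [hAcl, Matrix.mul_sub]
    rw [show C * (B * K * (C * A)) = ((C * B) * K) * (C * A) by
      simp only [Matrix.mul_assoc]]
    rw [hKmat, Matrix.one_mul, sub_self]
  have hCf : ∀ t, C.mulVec (f t) = v t := by
    intro t
    have h1 : ∀ z : Fin q → ℝ, C.mulVec (B.mulVec (K.mulVec z)) = z := by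
      intro z
      rw [Matrix.mulVec_mulVec]
      exact hK z
    simp only [hf, Matrix.mulVec_add, Matrix.mulVec_sub, h1]
    abel
  -- C x = yd on Icc
  have hCx : ∀ t ∈ Icc (0:ℝ) T, C.mulVec (x t) = yd t := by
    intro t ht
    set h : ℝ → Fin q → ℝ := fun s => C.mulVec (x s) - yd s with hh
    have hderiv : ∀ s ∈ Icc (0:ℝ) T, HasDerivWithinAt h 0 (Icc 0 T) s := by
      intro s hs
      have h1 : HasDerivAt (fun r => C.mulVec (x r)) (v s) s := by
        have h2 := (hxderiv s).const_mulVec' C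
        rwa [Matrix.mulVec_add, Matrix.mulVec_mulVec, hCAcl, Matrix.zero_mulVec, zero_add,
          hCf s] at h2
      have := (h1.hasDerivWithinAt).sub (hydderiv s hs)
      simp at this
      exact this
    have hdiff : DifferentiableOn ℝ h (Icc 0 T) := fun s hs =>
      (hderiv s hs).differentiableWithinAt
    have hfd : ∀ s ∈ Icc (0:ℝ) T, fderivWithin ℝ h (Icc 0 T) s = 0 := by
      intro s hs
      have h3 := (hderiv s hs).hasFDerivWithinAt.fderivWithin (uniqueDiffOn_Icc hT s hs)
      rw [h3]
      exact ContinuousLinearMap.ext fun r => by simp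
    have h0mem : (0:ℝ) ∈ Icc (0:ℝ) T := left_mem_Icc.2 hT.le
    have hconst := (convex_Icc (0:ℝ) T).is_const_of_fderivWithin_eq_zero hdiff hfd ht h0mem
    have h00 : h 0 = 0 := by
      simp [hh, hx0, hyd0]
    have : h t = 0 := by rw [hconst, h00]
    have := sub_eq_zero.mp this
    exact this
  -- variation of constants back to A
  refine ⟨u, hucont.continuousOn, ?_⟩
  intro t ht
  set φ : ℝ → Fin n → ℝ := fun τ => (exp ((-τ) • A)).mulVec (x τ) with hφ
  have hφderiv : ∀ τ, HasDerivAt φ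
      ((exp ((-τ) • A)).mulVec (B.mulVec (u τ) + W τ)) τ := by
    intro τ
    have h1 := hasDerivAt_mulVec (hasDerivAt_exp_neg_smul A τ) (hode' τ)
    convert h1 using 1
    rw [commute_exp_smul A (-τ)]
    rw [Matrix.neg_mulVec, ← Matrix.mulVec_mulVec]
    simp only [Matrix.mulVec_add]
    abel
  have hintcont : Continuous fun τ => (exp ((-τ) • A)).mulVec (B.mulVec (u τ) + W τ) :=
    continuous_mulVec₂ (continuous_exp_neg_smul A)
      ((continuous_const_mulVec B hucont).add hWcont)
  have hFTC : ∫ τ in (0:ℝ)..t, (exp ((-τ) • A)).mulVec (B.mulVec (u τ) + W τ)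
      = φ t - φ 0 :=
    intervalIntegral.integral_eq_sub_of_hasDerivAt (fun τ _ => hφderiv τ)
      (hintcont.intervalIntegrable 0 t)
  have hφ0 : φ 0 = x₀ := by simp [hφ, hx0, exp_zero, Matrix.one_mulVec]
  have hxφ : x t = (exp (t • A)).mulVec (φ t) := by
    rw [hφ, Matrix.mulVec_mulVec, exp_smul_neg_mul, Matrix.one_mulVec]
  -- pull exp(t•A) inside the integral
  set L : (Fin n → ℝ) →L[ℝ] (Fin n → ℝ) :=
    LinearMap.toContinuousLinearMap (exp (t • A)).mulVecLin with hL
  have hLint := L.intervalIntegral_comp_comm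
    ((hintcont.intervalIntegrable 0 t) : IntervalIntegrable _ volume 0 t)
  have hxeq : x t = (exp (t • A)).mulVec x₀
      + ∫ τ in (0:ℝ)..t, (exp ((t - τ) • A)).mulVec (B.mulVec (u τ) + W τ) := by
    rw [hxφ]
    have h2 : φ t = x₀ + ∫ τ in (0:ℝ)..t, (exp ((-τ) • A)).mulVec (B.mulVec (u τ) + W τ) := by
      rw [hFTC, hφ0]; abel
    rw [h2, Matrix.mulVec_add]
    congr 1
    have h3 : (exp (t • A)).mulVec
        (∫ τ in (0:ℝ)..t, (exp ((-τ) • A)).mulVec (B.mulVec (u τ) + W τ))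
        = ∫ τ in (0:ℝ)..t, (exp (t • A)).mulVec
            ((exp ((-τ) • A)).mulVec (B.mulVec (u τ) + W τ)) := by
      simpa [hL] using hLint.symm
    rw [h3]
    refine intervalIntegral.integral_congr fun τ _ => ?_
    rw [Matrix.mulVec_mulVec, ← exp_smul_sub]
  -- convert W to w on the integration interval and apply C
  have hWw : ∀ τ ∈ uIcc (0:ℝ) t, B.mulVec (u τ) + W τ = B.mulVec (u τ) + w τ := by
    intro τ hτ
    have hτ' : τ ∈ Icc (0:ℝ) T := by
      rw [uIcc_of_le ht.1] at hτ
      exact ⟨hτ.1, hτ.2.trans ht.2⟩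
    rw [hW]
    simp [hclid τ hτ']
  have hCint : Continuous fun τ => (exp ((t - τ) • A)).mulVec (B.mulVec (u τ) + W τ) := by
    have h1 : Continuous fun τ : ℝ => exp ((t - τ) • A) := by
      have h0 : Continuous fun τ : ℝ => t - τ := continuous_const.sub continuous_id
      have := (continuous_exp_smul A).comp h0
      simpa [Function.comp_def] using this
    exact continuous_mulVec₂ h1 ((continuous_const_mulVec B hucont).add hWcont)
  set LC : (Fin n → ℝ) →L[ℝ] (Fin q → ℝ) :=
    LinearMap.toContinuousLinearMap C.mulVecLin with hLC
  have hCcomm := LC.intervalIntegral_comp_comm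
    ((hCint.intervalIntegrable 0 t) : IntervalIntegrable _ volume 0 t)
  calc C.mulVec ((exp (t • A)).mulVec x₀) +
        (∫ τ in (0:ℝ)..t, C.mulVec ((exp ((t - τ) • A)).mulVec (B.mulVec (u τ) + w τ)))
      = C.mulVec ((exp (t • A)).mulVec x₀) +
        (∫ τ in (0:ℝ)..t, C.mulVec ((exp ((t - τ) • A)).mulVec (B.mulVec (u τ) + W τ))) := by
        congr 1
        refine intervalIntegral.integral_congr fun τ hτ => ?_
        rw [hWw τ hτ]
    _ = C.mulVec ((exp (t • A)).mulVec x₀) +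
        C.mulVec (∫ τ in (0:ℝ)..t, (exp ((t - τ) • A)).mulVec (B.mulVec (u τ) + W τ)) := by
        have h4 : (∫ τ in (0:ℝ)..t, C.mulVec ((exp ((t - τ) • A)).mulVec (B.mulVec (u τ) + W τ)))
            = C.mulVec (∫ τ in (0:ℝ)..t, (exp ((t - τ) • A)).mulVec (B.mulVec (u τ) + W τ)) := by
          simpa [hLC] using hCcomm
        rw [h4]
    _ = C.mulVec (x t) := by rw [hxeq, Matrix.mulVec_add]
    _ = yd t := hCx t ht
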